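/- Let v_max > 0 and let b : ℝ → ℝ be a continuously differentiable function with b(0) = 0, b'(x) > 0 for all x ∈ ℝ, and lim_{x → −∞} b(x) = −2ϖ for some real ϖ > 0. Let X > 0 be such that b(−X) = −ϖ, let η := min{ b'(s) : s ∈ [−X, 0] }, and let Λ := 4ϖ/(5·v_max). Then η > 0, and for every s ≤ 0 and every u ∈ ℝ with |u| ≤ Λ, one has (5·v_max/4)·|u|·|s| − s·b(s) ≤ (25·v_max²/(64·η))·u². -/

import Mathlib

/-- The key gain estimate in the proof of Proposition 6: with
`η = min{b'(s) : s ∈ [−X, 0]} > 0` and `Λ = 4ϖ/(5 v_max)`, for all `s ≤ 0` and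
`|u| ≤ Λ` one has `(5 v_max/4)|u||s| − s·b(s) ≤ (25 v_max²/(64η))·u²`. -/
theorem cruise_controller_gain_estimate (vmax ϖ X : ℝ) (b : ℝ → ℝ)
    (hv : 0 < vmax) (hϖ : 0 < ϖ) (hX : 0 < X)
    (hb : ContDiff ℝ 1 b) (hb0 : b 0 = 0) (hb' : ∀ x : ℝ, 0 < deriv b x)
    (hlim : Filter.Tendsto b Filter.atBot (nhds (-(2 * ϖ))))
    (hbX : b (-X) = -ϖ) :
    0 < sInf (deriv b '' Set.Icc (-X) 0) ∧
    ∀ s ≤ (0:ℝ), ∀ u : ℝ, |u| ≤ 4 * ϖ / (5 * vmax) →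
      5 * vmax / 4 * |u| * |s| - s * b s ≤
        25 * vmax ^ 2 / (64 * sInf (deriv b '' Set.Icc (-X) 0)) * u ^ 2 := by
  have hd : Differentiable ℝ b := hb.differentiable one_ne_zero
  have hcont : Continuous (deriv b) := hb.continuous_deriv le_rfl
  have hK : IsCompact (Set.Icc (-X) (0:ℝ)) := isCompact_Icc
  have hne : (Set.Icc (-X) (0:ℝ)).Nonempty := ⟨0, by constructor <;> linarith⟩
  obtain ⟨x₀, hx₀, hmin⟩ := hK.exists_isMinOn hne hcont.continuousOn
  have hinf : sInf (deriv b '' Set.Icc (-X) 0) = deriv b x₀ := by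
    apply IsLeast.csInf_eq
    exact ⟨⟨x₀, hx₀, rfl⟩, by rintro y ⟨x, hx, rfl⟩; exact hmin hx⟩
  set η := sInf (deriv b '' Set.Icc (-X) 0) with hηdef
  have hηpos : 0 < η := hinf ▸ hb' x₀
  have hηle : ∀ x ∈ Set.Icc (-X) (0:ℝ), η ≤ deriv b x := by
    intro x hx; rw [hinf]; exact hmin hx
  refine ⟨hηpos, ?_⟩
  intro s hs u hu
  have hmono : StrictMono b := strictMono_of_deriv_pos hb'
  have huϖ : 5 * vmax / 4 * |u| ≤ ϖ := by
    calc 5 * vmax / 4 * |u| ≤ 5 * vmax / 4 * (4 * ϖ / (5 * vmax)) :=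
          mul_le_mul_of_nonneg_left hu (by positivity)
      _ = ϖ := by field_simp
  have hrhs : 0 ≤ 25 * vmax ^ 2 / (64 * η) * u ^ 2 := by positivity
  have habs : |s| = -s := abs_of_nonpos hs
  by_cases hsX : s < -X
  · -- far region: b s ≤ -ϖ
    have hbs : b s ≤ -ϖ := hbX ▸ (hmono hsX).le
    have h1 : (-s) * b s ≤ (-s) * (-ϖ) :=
      mul_le_mul_of_nonneg_left hbs (by linarith)
    nlinarith [mul_nonneg (neg_nonneg.mpr hs) (sub_nonneg.mpr huϖ)]
  · -- near region: -X ≤ s ≤ 0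
    push_neg at hsX
    have hbs : b s ≤ η * s := by
      rcases eq_or_lt_of_le hs with h0 | h0
      · simp [h0, hb0]
      · obtain ⟨c, hc, hslope⟩ := exists_deriv_eq_slope b h0
          (hd.continuous.continuousOn) (fun x _ => (hd x).differentiableWithinAt)
      -- deriv b c = (b 0 - b s) / (0 - s)
        have hcmem : c ∈ Set.Icc (-X) (0:ℝ) :=
          ⟨le_trans hsX hc.1.le, hc.2.le⟩
        have h2 : η ≤ deriv b c := hηle c hcmem
        have h3 : b s = deriv b c * s := by
          rw [hb0] at hslope
          field_simp at hslope
          linarith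
        rw [h3]
        exact mul_le_mul_of_nonpos_right h2 hs
    have h4 : (-s) * b s ≤ (-s) * (η * s) :=
      mul_le_mul_of_nonneg_left hbs (by linarith)
    have heq : 25 * vmax ^ 2 / (64 * η) * u ^ 2 = 25 * vmax ^ 2 * u ^ 2 / (64 * η) := by
      ring
    rw [heq, le_div_iff₀ (by positivity), habs]
    nlinarith [sq_nonneg (5 * vmax * |u| - 8 * η * (-s)), sq_abs u, abs_nonneg u, hηpos,
      mul_le_mul_of_nonneg_left h4 (by positivity : (0:ℝ) ≤ 64 * η)]
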